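/- arXiv:2201.00797 — 4 statements merged into one kernel-verified Lean document; each statement's English description precedes it below -/
import Mathlib

section
/- Let X = (X_n)_{n∈ℤ} be a discrete white noise and let α > 0. Then ℙ(sup_{n∈ℤ} |X_n|/(1+|n|)^α < ∞) = 1 if and only if Σ_{n≥0} ℙ(|X_0| ≥ n^α) < ∞. -/
open MeasureTheory ProbabilityTheory Filter
open scoped ENNReal

lemma aux_antitone_tail {Ω : Type*} [MeasurableSpace Ω] (P : Measure Ω) (X0 : Ω → ℝ) {α : ℝ}
    (hα : 0 < α) : Antitone (fun j : ℕ => P {ω | (j : ℝ) ^ α ≤ |X0 ω|}) := by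
  intro i j hij
  apply measure_mono
  intro ω hω
  exact le_trans (Real.rpow_le_rpow (by positivity) (by exact_mod_cast hij) hα.le) hω

lemma aux_transfer (a : ℕ → ℝ≥0∞) (hanti : Antitone a) (h0 : a 0 ≠ ⊤)
    (htop : (∑' n : ℕ, a n) = ⊤) (m : ℕ) [NeZero m] :
    (∑' n : ℕ, a (m * (n + 1))) = ⊤ := by
  have h1 : (∑' j : ℕ, a j) ≤ ∑' j : ℕ, a (j / m * m) :=
    ENNReal.tsum_le_tsum fun j => hanti (Nat.div_mul_le_self j m)
  have h2 : (∑' j : ℕ, a (j / m * m)) = (m : ℝ≥0∞) * ∑' q : ℕ, a (q * m) := by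
    rw [← (Nat.divModEquiv m).symm.tsum_eq (fun j => a (j / m * m))]
    have key : ∀ p : ℕ × Fin m, (Nat.divModEquiv m).symm p / m * m = p.1 * m := by
      rintro ⟨q, r⟩
      simp only [Nat.divModEquiv_symm_apply]
      rw [mul_comm q m, Nat.mul_add_div (Nat.pos_of_neZero m), Nat.div_eq_of_lt r.is_lt,
        add_zero, mul_comm]
    calc (∑' p : ℕ × Fin m, a ((Nat.divModEquiv m).symm p / m * m))
        = ∑' p : ℕ × Fin m, a (p.1 * m) := tsum_congr fun p => by rw [key]
      _ = ∑' (q : ℕ) (_ : Fin m), a (q * m) := ENNReal.tsum_prod'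
      _ = ∑' q : ℕ, (m : ℝ≥0∞) * a (q * m) := by
          refine tsum_congr fun q => ?_
          rw [tsum_fintype]
          simp [Finset.sum_const, nsmul_eq_mul]
      _ = (m : ℝ≥0∞) * ∑' q : ℕ, a (q * m) := ENNReal.tsum_mul_left
  have h3 : (∑' q : ℕ, a (q * m)) = ⊤ := by
    by_contra hne
    have hne' : (∑' j : ℕ, a (j / m * m)) ≠ ⊤ := by
      rw [h2]
      exact ENNReal.mul_ne_top (ENNReal.natCast_ne_top m) hne
    exact hne' (top_le_iff.mp (htop ▸ h1))
  rw [tsum_eq_zero_add' (f := fun q : ℕ => a (q * m)) ENNReal.summable] at h3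
  have h4 : (∑' q : ℕ, a ((q + 1) * m)) = ⊤ := by
    by_contra hne
    simp only [zero_mul] at h3
    exact (ENNReal.add_ne_top.mpr ⟨h0, hne⟩) h3
  calc (∑' n : ℕ, a (m * (n + 1))) = ∑' n : ℕ, a ((n + 1) * m) :=
        tsum_congr fun n => by rw [mul_comm]
    _ = ⊤ := h4

lemma aux_iIndepSet {Ω : Type*} [MeasurableSpace Ω] (P : Measure Ω) [IsProbabilityMeasure P]
    (X : ℤ → Ω → ℝ)
    (hindep : iIndepFun X P)
    (hmeas : ∀ n, Measurable (X n))
    (T : ℕ → Set ℝ) (hT : ∀ n, MeasurableSet (T n)) :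
    iIndepSet (fun n : ℕ => X (n : ℤ) ⁻¹' T n) P := by
  rw [iIndepSet_iff_meas_biInter (fun n => (hmeas _) (hT n))]
  intro s
  have h := hindep.meas_biInter (S := s.image (fun n : ℕ => (n : ℤ)))
      (s := fun k : ℤ => X k ⁻¹' T k.toNat) (fun k _ => ⟨T k.toNat, hT _, rfl⟩)
  rw [Finset.set_biInter_finset_image, Finset.prod_image (by intro a _ b _ h; exact Nat.cast_injective h)] at h
  simpa using h

/-- For a discrete white noise `X` and `α > 0`, the event
`sup_n |X_n|/(1+|n|)^α < ∞` has probability `1` iff `Σ_{n ≥ 0} ℙ(|X_0| ≥ n^α) < ∞`. -/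
theorem weighted_linfty_iff_summable_tail
    {Ω : Type*} [MeasurableSpace Ω] (P : Measure Ω) [IsProbabilityMeasure P]
    (X : ℤ → Ω → ℝ) (hmeas : ∀ n, Measurable (X n))
    (hindep : iIndepFun X P)
    (hident : ∀ n : ℤ, IdentDistrib (X n) (X 0) P P)
    (α : ℝ) (hα : 0 < α) :
    P {ω | ∃ C : ℝ, ∀ n : ℤ, |X n ω| ≤ C * (1 + |(n : ℝ)|) ^ α} = 1 ↔
    (∑' n : ℕ, P {ω | (n : ℝ) ^ α ≤ |X 0 ω|}) < ⊤ := by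
  have hident' : ∀ (k : ℤ) (c : ℝ), P {ω | c ≤ |X k ω|} = P {ω | c ≤ |X 0 ω|} := by
    intro k c
    exact (hident k).measure_mem_eq (measurableSet_le measurable_const measurable_abs)
  have hanti := aux_antitone_tail P (X 0) hα
  constructor
  · -- forward: contradiction with divergent sum
    intro hP
    by_contra hs
    rw [not_lt, top_le_iff] at hs
    have hEk : ∀ k : ℕ, P {ω | ∀ n : ℤ, |X n ω| ≤ (k : ℝ) * (1 + |(n : ℝ)|) ^ α} = 0 := by
      intro k
      set m : ℕ := ⌈((k : ℝ) + 1) ^ (1 / α)⌉₊ + 1 with hm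
      haveI : NeZero m := ⟨Nat.succ_ne_zero _⟩
      have hmα : ((k : ℝ) + 1) ≤ (m : ℝ) ^ α := by
        have hb : (0:ℝ) ≤ ((k : ℝ) + 1) ^ (1 / α) := Real.rpow_nonneg (by positivity) _
        have h1 : ((k : ℝ) + 1) ^ (1 / α) ≤ (m : ℝ) := by
          rw [hm]
          push_cast
          linarith [Nat.le_ceil (((k : ℝ) + 1) ^ (1 / α))]
        have h2 : (((k : ℝ) + 1) ^ (1 / α)) ^ α = ((k : ℝ) + 1) := by
          rw [← Real.rpow_mul (by positivity), one_div_mul_cancel hα.ne', Real.rpow_one]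
        calc ((k : ℝ) + 1) = (((k : ℝ) + 1) ^ (1 / α)) ^ α := h2.symm
          _ ≤ (m : ℝ) ^ α := Real.rpow_le_rpow hb h1 hα.le
      set T : ℕ → Set ℝ := fun n => {x : ℝ | ((m * (n + 1) : ℕ) : ℝ) ^ α ≤ |x|} with hT
      have hTm : ∀ n, MeasurableSet (T n) :=
        fun n => measurableSet_le measurable_const measurable_abs
      have hInd : iIndepSet (fun n : ℕ => X (n : ℤ) ⁻¹' T n) P :=
        aux_iIndepSet P X hindep hmeas T hTm
      have hsum : (∑' n : ℕ, P (X (n : ℤ) ⁻¹' T n)) = ⊤ := by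
        have ht := aux_transfer (fun j : ℕ => P {ω | (j : ℝ) ^ α ≤ |X 0 ω|}) hanti
          (measure_ne_top P _) hs m
        rw [← ht]
        exact tsum_congr fun n => hident' (n : ℤ) _
      have hls : P (limsup (fun n : ℕ => X (n : ℤ) ⁻¹' T n) atTop) = 1 :=
        measure_limsup_eq_one (fun n => (hmeas _) (hTm n)) hInd hsum
      have hsub : {ω | ∀ n : ℤ, |X n ω| ≤ (k : ℝ) * (1 + |(n : ℝ)|) ^ α}
          ⊆ (limsup (fun n : ℕ => X (n : ℤ) ⁻¹' T n) atTop)ᶜ := by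
        intro ω hω hmem
        rw [mem_limsup_iff_frequently_mem] at hmem
        obtain ⟨n, hn⟩ := hmem.exists
        have h1 := hω (n : ℤ)
        have h2 : ((m * (n + 1) : ℕ) : ℝ) ^ α ≤ |X (n : ℤ) ω| := hn
        have habs : |((n : ℤ) : ℝ)| = (n : ℝ) := by
          rw [Int.cast_natCast]
          exact abs_of_nonneg (Nat.cast_nonneg n)
        rw [habs] at h1
        have hpos : (0:ℝ) < (1 + (n : ℝ)) ^ α := Real.rpow_pos_of_pos (by positivity) α
        have h3 : ((k : ℝ) + 1) * (1 + (n : ℝ)) ^ α ≤ ((m * (n + 1) : ℕ) : ℝ) ^ α := by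
          have hcast : ((m * (n + 1) : ℕ) : ℝ) = (m : ℝ) * (1 + (n : ℝ)) := by push_cast; ring
          rw [hcast, Real.mul_rpow (by positivity) (by positivity)]
          exact mul_le_mul_of_nonneg_right hmα (Real.rpow_nonneg (by positivity) α)
        nlinarith [hpos, h1, h2, h3]
      have hcompl : P (limsup (fun n : ℕ => X (n : ℤ) ⁻¹' T n) atTop)ᶜ = 0 := by
        rw [measure_compl (MeasurableSet.measurableSet_limsup fun n => (hmeas _) (hTm n))
          (measure_ne_top P _), hls]
        simp
      exact le_antisymm (le_trans (measure_mono hsub) (le_of_eq hcompl)) bot_le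
    have hS0 : P {ω | ∃ C : ℝ, ∀ n : ℤ, |X n ω| ≤ C * (1 + |(n : ℝ)|) ^ α} = 0 := by
      have hsub : {ω | ∃ C : ℝ, ∀ n : ℤ, |X n ω| ≤ C * (1 + |(n : ℝ)|) ^ α}
          ⊆ ⋃ k : ℕ, {ω | ∀ n : ℤ, |X n ω| ≤ (k : ℝ) * (1 + |(n : ℝ)|) ^ α} := by
        rintro ω ⟨C, hC⟩
        obtain ⟨k, hk⟩ := exists_nat_ge C
        refine Set.mem_iUnion.2 ⟨k, fun n => (hC n).trans ?_⟩
        exact mul_le_mul_of_nonneg_right hk (Real.rpow_nonneg (by positivity) _)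
      refine le_antisymm ?_ bot_le
      calc P {ω | ∃ C : ℝ, ∀ n : ℤ, |X n ω| ≤ C * (1 + |(n : ℝ)|) ^ α}
          ≤ P (⋃ k : ℕ, {ω | ∀ n : ℤ, |X n ω| ≤ (k : ℝ) * (1 + |(n : ℝ)|) ^ α}) :=
            measure_mono hsub
        _ ≤ ∑' k : ℕ, P {ω | ∀ n : ℤ, |X n ω| ≤ (k : ℝ) * (1 + |(n : ℝ)|) ^ α} :=
            measure_iUnion_le _
        _ = 0 := by simp [hEk]
    exact absurd (hP.symm.trans hS0) one_ne_zero
  · -- reverse: Borel–Cantelli 1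
    intro h
    set S : Set Ω := {ω | ∃ C : ℝ, ∀ n : ℤ, |X n ω| ≤ C * (1 + |(n : ℝ)|) ^ α} with hS
    set B : ℤ → Set Ω := fun k => {ω | (1 + |(k : ℝ)|) ^ α ≤ |X k ω|} with hB
    have hBsum : (∑' k : ℤ, P (B k)) ≠ ⊤ := by
      set a : ℕ → ℝ≥0∞ := fun j => P {ω | (j : ℝ) ^ α ≤ |X 0 ω|} with ha
      have key : ∀ k : ℤ, P (B k) ≤ a k.natAbs := by
        intro k
        rw [show P (B k) = P {ω | (1 + |(k : ℝ)|) ^ α ≤ |X 0 ω|} from hident' k _]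
        apply measure_mono
        intro ω hω
        refine le_trans (Real.rpow_le_rpow (by positivity) ?_ hα.le) hω
        rw [Nat.cast_natAbs, Int.cast_abs]
        linarith [abs_nonneg (k : ℝ)]
      have hsplit : (∑' k : ℤ, a k.natAbs)
          = (∑' n : ℕ, a ((n : ℤ)).natAbs) + ∑' n : ℕ, a ((-((n : ℤ) + 1)).natAbs) :=
        tsum_of_nat_of_neg_add_one ENNReal.summable ENNReal.summable
      have e1 : ∀ n : ℕ, ((n : ℤ)).natAbs = n := fun n => by omega
      have e2 : ∀ n : ℕ, ((-((n : ℤ) + 1)).natAbs) = n + 1 := fun n => by omega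
      have hle2 : (∑' k : ℤ, a k.natAbs) ≠ ⊤ := by
        rw [hsplit]
        refine ENNReal.add_ne_top.mpr ⟨?_, ?_⟩
        · rw [tsum_congr fun n => by rw [e1 n]]
          exact h.ne
        · refine ne_top_of_le_ne_top h.ne (le_trans (le_of_eq (tsum_congr fun n => by rw [e2 n])) ?_)
          exact ENNReal.tsum_le_tsum fun n => hanti (Nat.le_succ n)
      exact ne_top_of_le_ne_top hle2 (ENNReal.tsum_le_tsum key)
    have h0 : P (limsup B cofinite) = 0 := measure_limsup_cofinite_eq_zero hBsum
    have hae : ∀ᵐ ω ∂P, ω ∈ S := by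
      have hae0 : ∀ᵐ ω ∂P, ω ∉ limsup B cofinite := by
        rw [ae_iff]
        simpa using h0
      refine hae0.mono fun ω hω => ?_
      have hfin2 : {k : ℤ | ω ∈ B k}.Finite := by
        by_contra hinf
        exact hω (mem_limsup_iff_frequently_mem.mpr
          (frequently_cofinite_iff_infinite.mpr hinf))
      refine ⟨1 + ∑ k ∈ hfin2.toFinset, |X k ω|, fun n => ?_⟩
      have hsum0 : (0:ℝ) ≤ ∑ k ∈ hfin2.toFinset, |X k ω| :=
        Finset.sum_nonneg fun i _ => abs_nonneg _
      have hC1 : (1:ℝ) ≤ 1 + ∑ k ∈ hfin2.toFinset, |X k ω| := by linarith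
      have hr1 : (1:ℝ) ≤ (1 + |(n : ℝ)|) ^ α := by
        calc (1:ℝ) = 1 ^ α := (Real.one_rpow α).symm
        _ ≤ (1 + |(n : ℝ)|) ^ α :=
          Real.rpow_le_rpow one_pos.le (by linarith [abs_nonneg (n : ℝ)]) hα.le
      by_cases hb : ω ∈ B n
      · have hnF : n ∈ hfin2.toFinset := hfin2.mem_toFinset.mpr hb
        have h1 : |X n ω| ≤ ∑ k ∈ hfin2.toFinset, |X k ω| :=
          Finset.single_le_sum (f := fun k : ℤ => |X k ω|) (fun i _ => abs_nonneg _) hnF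
        calc |X n ω| ≤ 1 + ∑ k ∈ hfin2.toFinset, |X k ω| := by linarith
        _ ≤ (1 + ∑ k ∈ hfin2.toFinset, |X k ω|) * (1 + |(n : ℝ)|) ^ α :=
          le_mul_of_one_le_right (by linarith) hr1
      · have h1 : |X n ω| ≤ (1 + |(n : ℝ)|) ^ α := (not_le.mp hb).le
        calc |X n ω| ≤ (1 + |(n : ℝ)|) ^ α := h1
        _ ≤ (1 + ∑ k ∈ hfin2.toFinset, |X k ω|) * (1 + |(n : ℝ)|) ^ α :=
          le_mul_of_one_le_left (by positivity) hC1
    have hSc : P Sᶜ = 0 := by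
      rw [ae_iff] at hae
      exact hae
    refine le_antisymm prob_le_one ?_
    have hle := measure_union_le (μ := P) S Sᶜ
    rw [Set.union_compl_self, measure_univ, hSc, add_zero] at hle
    exact hle
end

section
/- Let X = (X_n)_{n∈ℤ} be a discrete white noise. Then the probability ℙ(∃ α ≥ 0, sup_{n∈ℤ} |X_n|/(1+|n|)^α < ∞) is either 0 or 1, and it equals 1 if and only if there exists α > 0 such that Σ_{n≥0} ℙ(|X_0| ≥ n^α) < ∞. -/
open MeasureTheory ProbabilityTheory Filter

theorem aux_iIndepFun_precomp {Ω ι ι' β : Type*} [MeasurableSpace Ω] {μ : Measure Ω}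
    [mβ : MeasurableSpace β] {f : ι → Ω → β}
    (h : iIndepFun f μ) {g : ι' → ι} (hg : Function.Injective g) :
    iIndepFun (fun i => f (g i)) μ := by
  classical
  rw [iIndepFun_iff_measure_inter_preimage_eq_mul] at h ⊢
  intro S sets hsets
  set e : ι' ↪ ι := ⟨g, hg⟩ with he
  set sets' : ι → Set β := fun j =>
    if hj : ∃ i ∈ S, g i = j then sets hj.choose else Set.univ with hsets'def
  have hkey : ∀ i ∈ S, sets' (g i) = sets i := by
    intro i hi
    have hj : ∃ i' ∈ S, g i' = g i := ⟨i, hi, rfl⟩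
    have h2 := hj.choose_spec
    simp only [hsets'def, dif_pos hj]
    rw [hg h2.2]
  have hmeas' : ∀ j, j ∈ S.map e → MeasurableSet (sets' j) := by
    intro j hj
    rw [Finset.mem_map] at hj
    obtain ⟨i, hi, rfl⟩ := hj
    rw [he]
    simp only [Function.Embedding.coeFn_mk]
    rw [hkey i hi]
    exact hsets i hi
  have hmain := h (S.map e) hmeas'
  have hInter : ⋂ j ∈ S.map e, f j ⁻¹' sets' j = ⋂ i ∈ S, f (g i) ⁻¹' sets i := by
    ext ω
    simp only [Set.mem_iInter, Finset.mem_map, he, Function.Embedding.coeFn_mk]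
    constructor
    · intro hω i hi
      have := hω (g i) ⟨i, hi, rfl⟩
      rwa [hkey i hi] at this
    · rintro hω j ⟨i, hi, rfl⟩
      rw [hkey i hi]
      exact hω i hi
  rw [← hInter, hmain, Finset.prod_map]
  exact Finset.prod_congr rfl fun i hi => by
    simp only [he, Function.Embedding.coeFn_mk]; rw [hkey i hi]

theorem aux_iIndepSet_preimage {Ω ι β : Type*} [MeasurableSpace Ω] {μ : Measure Ω}
    [mβ : MeasurableSpace β] {f : ι → Ω → β} (hf : ∀ i, Measurable (f i))
    (h : iIndepFun f μ) {A : ι → Set β} (hA : ∀ i, MeasurableSet (A i)) :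
    iIndepSet (fun i => f i ⁻¹' A i) μ := by
  rw [iIndepSet_iff_meas_biInter (fun i => (hf i) (hA i))]
  intro S
  exact h.measure_inter_preimage_eq_mul S (fun i _ => hA i)

/-- For a discrete white noise `X`, the probability that `X` is tempered
(i.e. `∃ α ≥ 0, sup_n |X_n|/(1+|n|)^α < ∞`) is `0` or `1`, and it equals `1` iff there
exists `α > 0` with `Σ_{n ≥ 0} ℙ(|X_0| ≥ n^α) < ∞`. -/
theorem zero_one_law_tempered
    {Ω : Type*} [MeasurableSpace Ω] (P : Measure Ω) [IsProbabilityMeasure P]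
    (X : ℤ → Ω → ℝ) (hmeas : ∀ n, Measurable (X n))
    (hindep : iIndepFun X P)
    (hident : ∀ n : ℤ, IdentDistrib (X n) (X 0) P P) :
    (P {ω | ∃ α : ℝ, 0 ≤ α ∧ ∃ C : ℝ, ∀ n : ℤ, |X n ω| ≤ C * (1 + |(n : ℝ)|) ^ α} = 0 ∨
     P {ω | ∃ α : ℝ, 0 ≤ α ∧ ∃ C : ℝ, ∀ n : ℤ, |X n ω| ≤ C * (1 + |(n : ℝ)|) ^ α} = 1) ∧
    (P {ω | ∃ α : ℝ, 0 ≤ α ∧ ∃ C : ℝ, ∀ n : ℤ, |X n ω| ≤ C * (1 + |(n : ℝ)|) ^ α} = 1 ↔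
      ∃ α : ℝ, 0 < α ∧ (∑' n : ℕ, P {ω | (n : ℝ) ^ α ≤ |X 0 ω|}) < ⊤) := by
  classical
  set A := {ω | ∃ α : ℝ, 0 ≤ α ∧ ∃ C : ℝ, ∀ n : ℤ, |X n ω| ≤ C * (1 + |(n : ℝ)|) ^ α} with hAdef
  have key : ∀ (m : ℤ) (c : ℝ), P {ω | c ≤ |X m ω|} = P {ω | c ≤ |X 0 ω|} := by
    intro m c
    exact (hident m).measure_mem_eq (measurableSet_le measurable_const measurable_abs)
  by_cases hc : ∃ α : ℝ, 0 < α ∧ (∑' n : ℕ, P {ω | (n : ℝ) ^ α ≤ |X 0 ω|}) < ⊤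
  · -- condition holds: P A = 1
    obtain ⟨α, hα, hsum⟩ := hc
    have hne1 : (∑' n : ℕ, P {ω | ((n : ℝ)) ^ α ≤ |X (n : ℤ) ω|}) ≠ ⊤ := by
      rw [tsum_congr (fun n : ℕ => key (n : ℤ) ((n : ℝ) ^ α))]
      exact hsum.ne
    have hne2 : (∑' n : ℕ, P {ω | ((n : ℝ)) ^ α ≤ |X (-(n : ℤ)) ω|}) ≠ ⊤ := by
      rw [tsum_congr (fun n : ℕ => key (-(n : ℤ)) ((n : ℝ) ^ α))]
      exact hsum.ne
    have hz1 : P {ω | ∃ᶠ n : ℕ in atTop, ((n : ℝ)) ^ α ≤ |X (n : ℤ) ω|} = 0 :=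
      measure_setOf_frequently_eq_zero hne1
    have hz2 : P {ω | ∃ᶠ n : ℕ in atTop, ((n : ℝ)) ^ α ≤ |X (-(n : ℤ)) ω|} = 0 :=
      measure_setOf_frequently_eq_zero hne2
    set U := {ω | ∃ᶠ n : ℕ in atTop, ((n : ℝ)) ^ α ≤ |X (n : ℤ) ω|} ∪
      {ω | ∃ᶠ n : ℕ in atTop, ((n : ℝ)) ^ α ≤ |X (-(n : ℤ)) ω|} with hUdef
    have hU : P U = 0 := measure_union_null hz1 hz2
    have hsub : Uᶜ ⊆ A := by
      intro ω hω
      simp only [hUdef, Set.mem_compl_iff, Set.mem_union, Set.mem_setOf_eq, not_or,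
        Filter.not_frequently] at hω
      obtain ⟨h1, h2⟩ := hω
      rw [Filter.eventually_atTop] at h1 h2
      obtain ⟨N1, hN1⟩ := h1
      obtain ⟨N2, hN2⟩ := h2
      set N : ℕ := max N1 N2 with hNdef
      have hIcc : (Finset.Icc (-(N : ℤ)) (N : ℤ)).Nonempty := by
        refine ⟨0, Finset.mem_Icc.2 ⟨?_, ?_⟩⟩ <;> omega
      set C : ℝ := max 1 ((Finset.Icc (-(N : ℤ)) (N : ℤ)).sup' hIcc (fun m => |X m ω|)) with hCdef
      refine ⟨α, hα.le, C, fun m => ?_⟩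
      have h1pow : (1 : ℝ) ≤ (1 + |(m : ℝ)|) ^ α :=
        Real.one_le_rpow (le_add_of_nonneg_right (abs_nonneg _)) hα.le
      have hCpos : (1 : ℝ) ≤ C := le_max_left _ _
      by_cases hm : N ≤ m.natAbs
      · have habs : |(m : ℝ)| = ((m.natAbs : ℕ) : ℝ) := by rw [Nat.cast_natAbs, Int.cast_abs]
        have hlt : |X m ω| < ((m.natAbs : ℕ) : ℝ) ^ α := by
          rcases Int.natAbs_eq m with hh | hh
          · have := hN1 m.natAbs (le_trans (le_max_left _ _) hm)
            rw [← hh] at this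
            exact lt_of_not_ge this
          · have := hN2 m.natAbs (le_trans (le_max_right _ _) hm)
            rw [← hh] at this
            exact lt_of_not_ge this
        have hle2 : ((m.natAbs : ℕ) : ℝ) ^ α ≤ (1 + |(m : ℝ)|) ^ α := by
          apply Real.rpow_le_rpow (by positivity) _ hα.le
          rw [habs]; linarith
        have : (1 + |(m : ℝ)|) ^ α ≤ C * (1 + |(m : ℝ)|) ^ α :=
          le_mul_of_one_le_left (by positivity) hCpos
        linarith
      · have hmem : m ∈ Finset.Icc (-(N : ℤ)) (N : ℤ) := by
          rw [Finset.mem_Icc]; omega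
        have : |X m ω| ≤ C := by
          rw [hCdef]
          exact le_trans (Finset.le_sup' (fun m => |X m ω|) hmem) (le_max_right _ _)
        calc |X m ω| ≤ C := this
          _ = C * 1 := (mul_one C).symm
          _ ≤ C * (1 + |(m : ℝ)|) ^ α := by
              apply mul_le_mul_of_nonneg_left h1pow (by linarith)
    have hone : P A = 1 := by
      have h1 : (1 : ENNReal) ≤ P A := by
        have huniv : (Set.univ : Set Ω) ⊆ U ∪ A := by
          intro ω _
          by_cases h : ω ∈ U
          · exact Or.inl h
          · exact Or.inr (hsub h)
        calc (1 : ENNReal) = P Set.univ := measure_univ.symm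
          _ ≤ P (U ∪ A) := measure_mono huniv
          _ ≤ P U + P A := measure_union_le U A
          _ = P A := by rw [hU, zero_add]
      exact le_antisymm prob_le_one h1
    exact ⟨Or.inr hone, fun _ => ⟨α, hα, hsum⟩, fun _ => hone⟩
  · -- condition fails: P A = 0
    push_neg at hc
    have hc' : ∀ α : ℝ, 0 < α → (∑' n : ℕ, P {ω | (n : ℝ) ^ α ≤ |X 0 ω|}) = ⊤ :=
      fun α hα => top_le_iff.1 (hc α hα)
    have hone : ∀ k : ℕ, P {ω | ∃ᶠ n : ℕ in atTop, ((n : ℝ)) ^ ((k : ℝ) + 1) ≤ |X (n : ℤ) ω|} = 1 := by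
      intro k
      have hAk : ∀ n : ℕ, MeasurableSet {x : ℝ | ((n : ℝ)) ^ ((k : ℝ) + 1) ≤ |x|} :=
        fun n => measurableSet_le measurable_const measurable_abs
      have hprecomp : iIndepFun
          (fun n : ℕ => X (n : ℤ)) P :=
        aux_iIndepFun_precomp hindep (fun a b h => by exact_mod_cast h)
      have hind : iIndepSet
          (fun n : ℕ => X (n : ℤ) ⁻¹' {x : ℝ | ((n : ℝ)) ^ ((k : ℝ) + 1) ≤ |x|}) P :=
        aux_iIndepSet_preimage (fun n => hmeas _) hprecomp hAk
      have hsum : (∑' n : ℕ, P (X (n : ℤ) ⁻¹' {x : ℝ | ((n : ℝ)) ^ ((k : ℝ) + 1) ≤ |x|})) = ⊤ := by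
        have heq : ∀ n : ℕ, P (X (n : ℤ) ⁻¹' {x : ℝ | ((n : ℝ)) ^ ((k : ℝ) + 1) ≤ |x|}) =
            P {ω | ((n : ℝ)) ^ ((k : ℝ) + 1) ≤ |X 0 ω|} := fun n => key (n : ℤ) _
        rw [tsum_congr heq]
        exact hc' ((k : ℝ) + 1) (by positivity)
      have hmain := measure_limsup_eq_one
        (fun n => (hmeas ((n : ℕ) : ℤ)) (hAk n)) hind hsum
      have hset : limsup (fun n : ℕ => X (n : ℤ) ⁻¹' {x : ℝ | ((n : ℝ)) ^ ((k : ℝ) + 1) ≤ |x|})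
          atTop = {ω | ∃ᶠ n : ℕ in atTop, ((n : ℝ)) ^ ((k : ℝ) + 1) ≤ |X (n : ℤ) ω|} := by
        ext ω
        rw [mem_limsup_iff_frequently_mem]
        rfl
      rwa [hset] at hmain
    have hzero : P (⋃ k : ℕ, {ω | ∃ᶠ n : ℕ in atTop, ((n : ℝ)) ^ ((k : ℝ) + 1) ≤ |X (n : ℤ) ω|}ᶜ)
        = 0 := by
      apply measure_iUnion_null
      intro k
      have hms : MeasurableSet {ω | ∃ᶠ n : ℕ in atTop, ((n : ℝ)) ^ ((k : ℝ) + 1) ≤ |X (n : ℤ) ω|} := by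
        have : {ω | ∃ᶠ n : ℕ in atTop, ((n : ℝ)) ^ ((k : ℝ) + 1) ≤ |X (n : ℤ) ω|} =
            limsup (fun n : ℕ => X (n : ℤ) ⁻¹' {x : ℝ | ((n : ℝ)) ^ ((k : ℝ) + 1) ≤ |x|}) atTop := by
          ext ω
          rw [mem_limsup_iff_frequently_mem]
          rfl
        rw [this]
        exact MeasurableSet.measurableSet_limsup
          (fun n => (hmeas ((n : ℕ) : ℤ)) (measurableSet_le measurable_const measurable_abs))
      rw [measure_compl hms (measure_ne_top P _), hone k, measure_univ, tsub_self]
    have hsub : A ⊆ ⋃ k : ℕ, {ω | ∃ᶠ n : ℕ in atTop, ((n : ℝ)) ^ ((k : ℝ) + 1) ≤ |X (n : ℤ) ω|}ᶜ := by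
      intro ω hω
      obtain ⟨α, hα0, C, hC⟩ := hω
      refine Set.mem_iUnion.2 ⟨⌈α⌉₊, ?_⟩
      intro hfreq
      simp only [Set.mem_setOf_eq] at hfreq
      set k : ℕ := ⌈α⌉₊ with hkdef
      have hC0 : 0 ≤ C := by
        have := hC 0
        simp only [Int.cast_zero, abs_zero, add_zero, Real.one_rpow, mul_one] at this
        exact le_trans (abs_nonneg _) this
      set β : ℝ := (k : ℝ) + 1 - α with hβdef
      have hβ : 0 < β := by
        have := Nat.le_ceil α
        rw [hβdef]
        have hkα : α ≤ (k : ℝ) := this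
        linarith
      have hev : ∀ᶠ n : ℕ in atTop, C * 2 ^ α < (n : ℝ) ^ β :=
        ((tendsto_rpow_atTop hβ).comp tendsto_natCast_atTop_atTop).eventually_gt_atTop (C * 2 ^ α)
      have hev1 : ∀ᶠ n : ℕ in atTop, 1 ≤ n := eventually_ge_atTop 1
      obtain ⟨n, hn1, hn2, hn3⟩ := (hfreq.and_eventually (hev.and hev1)).exists
      have hnpos : (0 : ℝ) < (n : ℝ) := by exact_mod_cast hn3
      have hn1r : (1 : ℝ) ≤ (n : ℝ) := by exact_mod_cast hn3
      have hb1 : (1 : ℝ) + |(((n : ℕ) : ℤ) : ℝ)| ≤ 2 * (n : ℝ) := by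
        push_cast
        rw [abs_of_nonneg hnpos.le]
        linarith
      have h2 : C * (1 + |(((n : ℕ) : ℤ) : ℝ)|) ^ α ≤ C * (2 * (n : ℝ)) ^ α :=
        mul_le_mul_of_nonneg_left (Real.rpow_le_rpow (by positivity) hb1 hα0) hC0
      have h3 : C * (2 * (n : ℝ)) ^ α = (C * 2 ^ α) * (n : ℝ) ^ α := by
        rw [Real.mul_rpow (by norm_num) hnpos.le]
        ring
      have h4 : (C * 2 ^ α) * (n : ℝ) ^ α < (n : ℝ) ^ β * (n : ℝ) ^ α :=
        mul_lt_mul_of_pos_right hn2 (Real.rpow_pos_of_pos hnpos α)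
      have h5 : (n : ℝ) ^ β * (n : ℝ) ^ α = (n : ℝ) ^ ((k : ℝ) + 1) := by
        rw [← Real.rpow_add hnpos]
        congr 1
        rw [hβdef]
        ring
      have hCn := hC ((n : ℕ) : ℤ)
      have hn1' : ((n : ℕ) : ℝ) ^ ((k : ℝ) + 1) ≤ |X ((n : ℕ) : ℤ) ω| := hn1
      linarith
    have hzeroA : P A = 0 := measure_mono_null hsub hzero
    refine ⟨Or.inl hzeroA, ?_, ?_⟩
    · intro h1
      rw [hzeroA] at h1
      exact absurd h1 (by norm_num)
    · intro ⟨α, hα, hlt⟩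
      exact absurd (hc' α hα ▸ hlt) (lt_irrefl ⊤)
end

section
/- Let X = (X_n)_{n∈ℤ} be a discrete white noise. Then ℙ(∃ α ≥ 0, sup_{n∈ℤ} |X_n|/(1+|n|)^α < ∞) = 1 if and only if there exists ε > 0 such that 𝔼[|X_0|^ε] < ∞; moreover, if 𝔼[|X_0|^ε] = ∞ for every ε > 0, then ℙ(∃ α ≥ 0, sup_{n∈ℤ} |X_n|/(1+|n|)^α < ∞) = 0. -/
open MeasureTheory ProbabilityTheory

open Filter
open scoped ENNReal

private lemma le_one_add_tsum_ind (a : ℝ≥0∞) :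
    a ≤ 1 + ∑' j : ℕ, (if ((j : ℝ≥0∞) + 1 ≤ a) then (1:ℝ≥0∞) else 0) := by
  rcases eq_or_ne a ⊤ with rfl | ha
  · have : (∑' j : ℕ, (if ((j : ℝ≥0∞) + 1 ≤ (⊤:ℝ≥0∞)) then (1:ℝ≥0∞) else 0)) = ⊤ := by
      have : ∀ j : ℕ, (if ((j : ℝ≥0∞) + 1 ≤ (⊤:ℝ≥0∞)) then (1:ℝ≥0∞) else 0) = 1 :=
        fun j => if_pos le_top
      simp_rw [this]
      exact ENNReal.tsum_const_eq_top_of_ne_zero one_ne_zero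
    rw [this]
    simp
  · set r := a.toReal with hr
    have hr0 : 0 ≤ r := ENNReal.toReal_nonneg
    have har : a = ENNReal.ofReal r := (ENNReal.ofReal_toReal ha).symm
    have hcond : ∀ j : ℕ, (((j : ℝ≥0∞) + 1 ≤ a) ↔ j < ⌊r⌋₊) := by
      intro j
      rw [har, show ((j:ℝ≥0∞) + 1) = ENNReal.ofReal ((j:ℝ) + 1) by
        rw [ENNReal.ofReal_add (by positivity) zero_le_one]; simp,
        ENNReal.ofReal_le_ofReal_iff hr0]
      rw [show ((j:ℝ) + 1) = ((j+1 : ℕ) : ℝ) by push_cast; ring, ← Nat.le_floor_iff hr0]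
      omega
    have htsum : (∑' j : ℕ, (if ((j : ℝ≥0∞) + 1 ≤ a) then (1:ℝ≥0∞) else 0)) = (⌊r⌋₊ : ℝ≥0∞) := by
      rw [tsum_congr (fun j => if_congr (hcond j) rfl rfl)]
      rw [tsum_eq_sum (s := Finset.range ⌊r⌋₊) (fun j hj => if_neg (by simpa using hj))]
      rw [Finset.sum_ite_of_true (fun j hj => Finset.mem_range.mp hj)]
      simp
    rw [htsum, har]
    calc ENNReal.ofReal r ≤ ENNReal.ofReal (1 + (⌊r⌋₊ : ℝ)) :=
          ENNReal.ofReal_le_ofReal (by have := Nat.lt_floor_add_one r; linarith)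
      _ = 1 + (⌊r⌋₊ : ℝ≥0∞) := by
          rw [ENNReal.ofReal_add zero_le_one (by positivity)]; simp

private lemma lintegral_le_one_add_tsum {Ω : Type*} [MeasurableSpace Ω] (P : Measure Ω)
    [IsProbabilityMeasure P] (g : Ω → ℝ≥0∞) (hg : Measurable g) :
    ∫⁻ ω, g ω ∂P ≤ 1 + ∑' j : ℕ, P {ω | (j : ℝ≥0∞) + 1 ≤ g ω} := by
  have hms : ∀ j : ℕ, MeasurableSet {ω | (j : ℝ≥0∞) + 1 ≤ g ω} :=
    fun j => measurableSet_le measurable_const hg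
  have h1 : ∫⁻ ω, g ω ∂P
      ≤ ∫⁻ ω, (1 + ∑' j : ℕ, (if ((j : ℝ≥0∞) + 1 ≤ g ω) then (1:ℝ≥0∞) else 0)) ∂P :=
    lintegral_mono fun ω => le_one_add_tsum_ind (g ω)
  refine h1.trans ?_
  rw [lintegral_add_left measurable_const, lintegral_const, measure_univ, mul_one]
  gcongr
  have hind : ∀ (j : ℕ) (ω : Ω), (if ((j : ℝ≥0∞) + 1 ≤ g ω) then (1:ℝ≥0∞) else 0)
      = Set.indicator {ω | (j : ℝ≥0∞) + 1 ≤ g ω} (1 : Ω → ℝ≥0∞) ω := by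
    intro j ω; rw [Set.indicator_apply]; rfl
  simp_rw [hind]
  rw [lintegral_tsum (fun j => ((measurable_one.indicator (hms j)).aemeasurable))]
  exact le_of_eq (tsum_congr fun j => lintegral_indicator_one (hms j))

private lemma markov_tail {Ω : Type*} [MeasurableSpace Ω] (P : Measure Ω)
    (Y : Ω → ℝ) (hY : Measurable Y) (ε : ℝ) (hε : 0 < ε) (t : ℝ) (ht : 1 ≤ t) :
    P {ω | t < |Y ω|} ≤ (∫⁻ ω, ENNReal.ofReal (|Y ω| ^ ε) ∂P) / ENNReal.ofReal (t ^ ε) := by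
  have ht0 : (0:ℝ) < t := lt_of_lt_of_le one_pos ht
  have htε : (0:ℝ) < t ^ ε := Real.rpow_pos_of_pos ht0 ε
  have hsub : {ω | t < |Y ω|} ⊆ {ω | ENNReal.ofReal (t ^ ε) ≤ ENNReal.ofReal (|Y ω| ^ ε)} := by
    intro ω hω
    exact ENNReal.ofReal_le_ofReal
      (Real.rpow_le_rpow ht0.le (le_of_lt hω) hε.le)
  have hmark := mul_meas_ge_le_lintegral₀ (μ := P)
    (f := fun ω => ENNReal.ofReal (|Y ω| ^ ε)) (by fun_prop) (ENNReal.ofReal (t ^ ε))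
  calc P {ω | t < |Y ω|} ≤ P {ω | ENNReal.ofReal (t ^ ε) ≤ ENNReal.ofReal (|Y ω| ^ ε)} :=
        measure_mono hsub
    _ ≤ (∫⁻ ω, ENNReal.ofReal (|Y ω| ^ ε) ∂P) / ENNReal.ofReal (t ^ ε) := by
        rw [ENNReal.le_div_iff_mul_le (Or.inl (by simpa using htε)) (Or.inl ENNReal.ofReal_ne_top)]
        rw [mul_comm]; exact hmark

private lemma summable_int_aux : Summable (fun n : ℤ => (((1:ℝ) + |(n:ℝ)|) ^ 2)⁻¹) := by
  have h1 : Summable (fun n : ℤ => 1 / (n:ℝ) ^ 2) := Real.summable_one_div_int_pow.mpr one_lt_two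
  have h2 : Summable (Set.indicator ({0} : Set ℤ) (fun _ => (1:ℝ))) :=
    summable_of_finite_support ((Set.finite_singleton (0:ℤ)).subset Set.support_indicator_subset)
  refine Summable.of_nonneg_of_le (fun n => by positivity) (fun n => ?_) (h1.add h2)
  by_cases hn : n = 0
  · subst hn; simp
  · have hind : Set.indicator ({0} : Set ℤ) (fun _ => (1:ℝ)) n = 0 :=
      Set.indicator_of_notMem (by simpa using hn) _
    rw [hind, add_zero, one_div]
    have h0 : (1:ℝ) ≤ |(n:ℝ)| := by
      rw [← Int.cast_abs]; exact_mod_cast Int.one_le_abs (by exact_mod_cast hn)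
    have : (n:ℝ)^2 ≤ ((1:ℝ) + |(n:ℝ)|)^2 := by
      rw [← sq_abs]; apply pow_le_pow_left₀ (abs_nonneg _); linarith
    exact inv_anti₀ (by positivity) this

private lemma part_one {Ω : Type*} [MeasurableSpace Ω] (P : Measure Ω) [IsProbabilityMeasure P]
    (X : ℤ → Ω → ℝ) (hmeas : ∀ n, Measurable (X n))
    (hident : ∀ n : ℤ, IdentDistrib (X n) (X 0) P P)
    (ε : ℝ) (hε : 0 < ε) (hM : (∫⁻ ω, ENNReal.ofReal (|X 0 ω| ^ ε) ∂P) < ⊤) :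
    P {ω | ∃ α : ℝ, 0 ≤ α ∧ ∃ C : ℝ, ∀ n : ℤ, |X n ω| ≤ C * (1 + |(n : ℝ)|) ^ α} = 1 := by
  set A := {ω | ∃ α : ℝ, 0 ≤ α ∧ ∃ C : ℝ, ∀ n : ℤ, |X n ω| ≤ C * (1 + |(n : ℝ)|) ^ α} with hA
  set M := ∫⁻ ω, ENNReal.ofReal (|X 0 ω| ^ ε) ∂P with hMdef
  set α : ℝ := 2 / ε with hαdef
  have hα0 : 0 ≤ α := by positivity
  set F : ℤ → Set Ω := fun n => {ω | (1 + |(n:ℝ)|) ^ α < |X n ω|} with hF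
  have hbase : ∀ n : ℤ, (0:ℝ) < 1 + |(n:ℝ)| := fun n => by positivity
  have hbase1 : ∀ n : ℤ, (1:ℝ) ≤ 1 + |(n:ℝ)| := fun n => le_add_of_nonneg_right (abs_nonneg _)
  have htail : ∀ n : ℤ, P (F n) ≤ M / ENNReal.ofReal ((1 + |(n:ℝ)|) ^ (2:ℕ)) := by
    intro n
    have ht1 : (1:ℝ) ≤ (1 + |(n:ℝ)|) ^ α := Real.one_le_rpow (hbase1 n) hα0
    have hid : P (F n) = P {ω | (1 + |(n:ℝ)|) ^ α < |X 0 ω|} := by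
      have h1 : F n = X n ⁻¹' {x : ℝ | (1 + |(n:ℝ)|) ^ α < |x|} := rfl
      have h2 : {ω | (1 + |(n:ℝ)|) ^ α < |X 0 ω|}
          = X 0 ⁻¹' {x : ℝ | (1 + |(n:ℝ)|) ^ α < |x|} := rfl
      rw [h1, h2, (hident n).measure_mem_eq (measurableSet_lt measurable_const measurable_abs)]
    have hexp : ((1 + |(n:ℝ)|) ^ α) ^ ε = (1 + |(n:ℝ)|) ^ (2:ℕ) := by
      rw [← Real.rpow_natCast (1 + |(n:ℝ)|) 2, ← Real.rpow_mul (hbase n).le]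
      congr 1
      rw [hαdef, div_mul_cancel₀ _ hε.ne']
      norm_num
    rw [hid]
    have := markov_tail P (X 0) (hmeas 0) ε hε ((1 + |(n:ℝ)|) ^ α) ht1
    rwa [hexp] at this
  have hsum : (∑' n : ℤ, P (F n)) ≠ ⊤ := by
    have h1 : (∑' n : ℤ, P (F n))
        ≤ ∑' n : ℤ, M * ENNReal.ofReal ((((1:ℝ) + |(n:ℝ)|) ^ 2)⁻¹) := by
      refine ENNReal.tsum_le_tsum fun n => (htail n).trans (le_of_eq ?_)
      rw [div_eq_mul_inv, ENNReal.ofReal_inv_of_pos (by positivity)]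
    have h2 : (∑' n : ℤ, M * ENNReal.ofReal ((((1:ℝ) + |(n:ℝ)|) ^ 2)⁻¹))
        = M * ENNReal.ofReal (∑' n : ℤ, (((1:ℝ) + |(n:ℝ)|) ^ 2)⁻¹) := by
      rw [ENNReal.tsum_mul_left, ENNReal.ofReal_tsum_of_nonneg (fun n => by positivity)
        summable_int_aux]
    exact ne_top_of_le_ne_top (by exact ENNReal.mul_ne_top hM.ne ENNReal.ofReal_ne_top)
      (h1.trans (le_of_eq h2))
  have hfin := ae_finite_setOf_mem hsum
  have hsub : ∀ ω : Ω, {n : ℤ | ω ∈ F n}.Finite → ω ∈ A := by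
    intro ω hfinω
    refine ⟨α, hα0, 1 + ∑ n ∈ hfinω.toFinset, |X n ω|, fun n => ?_⟩
    have hsumnn : (0:ℝ) ≤ ∑ n ∈ hfinω.toFinset, |X n ω| :=
      Finset.sum_nonneg fun i _ => abs_nonneg _
    have hrp : (0:ℝ) < (1 + |(n:ℝ)|) ^ α := Real.rpow_pos_of_pos (hbase n) α
    have hr1 : (1:ℝ) ≤ (1 + |(n:ℝ)|) ^ α := Real.one_le_rpow (hbase1 n) hα0
    by_cases hn : ω ∈ F n
    · have hmem : n ∈ hfinω.toFinset := hfinω.mem_toFinset.mpr hn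
      have h1 : |X n ω| ≤ ∑ m ∈ hfinω.toFinset, |X m ω| :=
        Finset.single_le_sum (fun i _ => abs_nonneg (X i ω)) hmem
      calc |X n ω| ≤ 1 + ∑ m ∈ hfinω.toFinset, |X m ω| := by linarith
        _ = (1 + ∑ m ∈ hfinω.toFinset, |X m ω|) * 1 := (mul_one _).symm
        _ ≤ (1 + ∑ m ∈ hfinω.toFinset, |X m ω|) * (1 + |(n:ℝ)|) ^ α :=
            mul_le_mul_of_nonneg_left hr1 (by linarith)
    · have h1 : |X n ω| ≤ (1 + |(n:ℝ)|) ^ α := not_lt.mp hn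
      calc |X n ω| ≤ (1 + |(n:ℝ)|) ^ α := h1
        _ = 1 * (1 + |(n:ℝ)|) ^ α := (one_mul _).symm
        _ ≤ (1 + ∑ m ∈ hfinω.toFinset, |X m ω|) * (1 + |(n:ℝ)|) ^ α :=
            mul_le_mul_of_nonneg_right (by linarith) hrp.le
  have hE : P {ω | ¬ {n : ℤ | ω ∈ F n}.Finite} = 0 := by
    rw [← ae_iff] ; exact hfin
  have huniv : (Set.univ : Set Ω) ⊆ {ω | ¬ {n : ℤ | ω ∈ F n}.Finite} ∪ A := by
    intro ω _
    by_cases h : {n : ℤ | ω ∈ F n}.Finite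
    · exact Or.inr (hsub ω h)
    · exact Or.inl h
  have h1 : (1:ℝ≥0∞) ≤ P A := by
    calc (1:ℝ≥0∞) = P Set.univ := (measure_univ).symm
      _ ≤ P ({ω | ¬ {n : ℤ | ω ∈ F n}.Finite} ∪ A) := measure_mono huniv
      _ ≤ P {ω | ¬ {n : ℤ | ω ∈ F n}.Finite} + P A := measure_union_le _ _
      _ = P A := by rw [hE, zero_add]
  exact le_antisymm prob_le_one h1

private lemma tsum_tail_eq_top {Ω : Type*} [MeasurableSpace Ω] (P : Measure Ω)
    [IsProbabilityMeasure P] (Y : Ω → ℝ) (hY : Measurable Y)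
    (hall : ∀ ε : ℝ, 0 < ε → (∫⁻ ω, ENNReal.ofReal (|Y ω| ^ ε) ∂P) = ⊤) (k m : ℕ) :
    (∑' j : ℕ, P {ω | (m:ℝ) * (1 + (j:ℝ)) ^ (k:ℝ) < |Y ω|}) = ⊤ := by
  by_contra hne
  set ε : ℝ := 1 / ((k:ℝ)+1) with hεdef
  have hε0 : 0 < ε := by positivity
  set g : Ω → ℝ≥0∞ := fun ω => ENNReal.ofReal (|Y ω| ^ ε) with hg
  have hgm : Measurable g := by
    have hc : Continuous fun x : ℝ => |x| ^ ε := by fun_prop (disch := positivity)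
    exact ENNReal.measurable_ofReal.comp (hc.measurable.comp hY)
  have hkey : ∀ j : ℕ, m ≤ j →
      P {ω | (j:ℝ≥0∞) + 1 ≤ g ω} ≤ P {ω | (m:ℝ) * (1 + (j:ℝ)) ^ (k:ℝ) < |Y ω|} := by
    intro j hj
    apply measure_mono
    intro ω hω
    simp only [Set.mem_setOf_eq] at hω ⊢
    have h1 : ((j:ℝ) + 1) ≤ |Y ω| ^ ε := by
      rw [show ((j:ℝ≥0∞)+1) = ENNReal.ofReal ((j:ℝ)+1) by
        rw [ENNReal.ofReal_add (by positivity) zero_le_one]; simp] at hω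
      exact (ENNReal.ofReal_le_ofReal_iff (by positivity)).mp hω
    have h2 : ((j:ℝ)+1) ^ (k+1) ≤ (|Y ω| ^ ε) ^ (k+1) :=
      pow_le_pow_left₀ (by positivity) h1 _
    have h3 : (|Y ω| ^ ε) ^ (k+1) = |Y ω| := by
      rw [← Real.rpow_natCast (|Y ω| ^ ε) (k+1), ← Real.rpow_mul (abs_nonneg _)]
      rw [show ε * ((k+1 : ℕ):ℝ) = 1 by rw [hεdef]; push_cast; field_simp]
      exact Real.rpow_one _
    have h4 : (m:ℝ) * (1 + (j:ℝ)) ^ (k:ℝ) < ((j:ℝ)+1) ^ (k+1) := by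
      rw [Real.rpow_natCast, pow_succ]
      have hmj : (m:ℝ) < (j:ℝ) + 1 := by exact_mod_cast Nat.lt_succ_of_le hj
      have hpos : (0:ℝ) < (1 + (j:ℝ)) ^ k := by positivity
      calc (m:ℝ) * (1 + (j:ℝ)) ^ k < ((j:ℝ)+1) * (1 + (j:ℝ)) ^ k :=
            mul_lt_mul_of_pos_right hmj hpos
        _ = ((j:ℝ)+1) ^ k * ((j:ℝ)+1) := by ring_nf
      -- need (1+j)^k = (j+1)^k
    calc (m:ℝ) * (1 + (j:ℝ)) ^ (k:ℝ) < ((j:ℝ)+1) ^ (k+1) := h4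
      _ ≤ (|Y ω| ^ ε) ^ (k+1) := h2
      _ = |Y ω| := h3
  have hsplit : ∀ j : ℕ, P {ω | (j:ℝ≥0∞) + 1 ≤ g ω}
      ≤ (if j < m then (1:ℝ≥0∞) else 0) + P {ω | (m:ℝ) * (1 + (j:ℝ)) ^ (k:ℝ) < |Y ω|} := by
    intro j
    by_cases hj : j < m
    · rw [if_pos hj]
      exact le_add_right prob_le_one
    · rw [if_neg hj, zero_add]
      exact hkey j (not_lt.mp hj)
  have hif : (∑' j : ℕ, (if j < m then (1:ℝ≥0∞) else 0)) ≤ (m : ℝ≥0∞) := by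
    rw [tsum_eq_sum (s := Finset.range m) (fun j hj => if_neg (by simpa using hj))]
    calc (∑ j ∈ Finset.range m, if j < m then (1:ℝ≥0∞) else 0)
        ≤ ∑ _j ∈ Finset.range m, (1:ℝ≥0∞) :=
          Finset.sum_le_sum (fun j _ => by split <;> simp)
      _ = (m : ℝ≥0∞) := by simp
  have hfin : ∫⁻ ω, g ω ∂P ≠ ⊤ := by
    have h1 := lintegral_le_one_add_tsum P g hgm
    have h2 : (∑' j : ℕ, P {ω | (j:ℝ≥0∞) + 1 ≤ g ω})
        ≤ (∑' j : ℕ, (if j < m then (1:ℝ≥0∞) else 0))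
          + ∑' j : ℕ, P {ω | (m:ℝ) * (1 + (j:ℝ)) ^ (k:ℝ) < |Y ω|} := by
      rw [← ENNReal.tsum_add]
      exact ENNReal.tsum_le_tsum hsplit
    have hb1 : (∑' j : ℕ, (if j < m then (1:ℝ≥0∞) else 0)) ≠ ⊤ :=
      ne_top_of_le_ne_top (ENNReal.natCast_ne_top m) hif
    have hb2 : (∑' j : ℕ, (if j < m then (1:ℝ≥0∞) else 0))
        + (∑' j : ℕ, P {ω | (m:ℝ) * (1 + (j:ℝ)) ^ (k:ℝ) < |Y ω|}) ≠ ⊤ :=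
      ENNReal.add_ne_top.mpr ⟨hb1, hne⟩
    have h3 : (∑' j : ℕ, P {ω | (j:ℝ≥0∞) + 1 ≤ g ω}) ≠ ⊤ := ne_top_of_le_ne_top hb2 h2
    have hb3 : (1:ℝ≥0∞) + (∑' j : ℕ, P {ω | (j:ℝ≥0∞) + 1 ≤ g ω}) ≠ ⊤ :=
      ENNReal.add_ne_top.mpr ⟨ENNReal.one_ne_top, h3⟩
    exact ne_top_of_le_ne_top hb3 h1
  exact hfin (hall ε hε0)

private lemma part_two {Ω : Type*} [MeasurableSpace Ω] (P : Measure Ω) [IsProbabilityMeasure P]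
    (X : ℤ → Ω → ℝ) (hmeas : ∀ n, Measurable (X n))
    (hindep : iIndepFun X P)
    (hident : ∀ n : ℤ, IdentDistrib (X n) (X 0) P P)
    (hall : ∀ ε : ℝ, 0 < ε → (∫⁻ ω, ENNReal.ofReal (|X 0 ω| ^ ε) ∂P) = ⊤) :
    P {ω | ∃ α : ℝ, 0 ≤ α ∧ ∃ C : ℝ, ∀ n : ℤ, |X n ω| ≤ C * (1 + |(n : ℝ)|) ^ α} = 0 := by
  set B : ℕ → ℕ → Set Ω :=
    fun k m => {ω | ∀ n : ℤ, |X n ω| ≤ (m:ℝ) * (1 + |(n:ℝ)|) ^ ((k:ℕ):ℝ)} with hB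
  -- each B k m is null
  have hBnull : ∀ k m : ℕ, P (B k m) = 0 := by
    intro k m
    set sets : ℤ → Set ℝ := fun n => {x | |x| ≤ (m:ℝ) * (1 + |(n:ℝ)|) ^ ((k:ℕ):ℝ)} with hsetsdef
    have hsets : ∀ n : ℤ, MeasurableSet (sets n) :=
      fun n => measurableSet_le measurable_abs measurable_const
    set p : ℕ → ℝ≥0∞ := fun j => P {ω | (m:ℝ) * (1 + (j:ℝ)) ^ ((k:ℕ):ℝ) < |X 0 ω|} with hp
    set q : ℕ → ℝ≥0∞ := fun j => P (X 0 ⁻¹' sets (j:ℤ)) with hq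
    have hdiv : (∑' j : ℕ, p j) = ⊤ := tsum_tail_eq_top P (X 0) (hmeas 0) hall k m
    have hcast : ∀ j : ℕ, |(((j:ℤ)):ℝ)| = (j:ℝ) := by
      intro j; rw [Int.cast_natCast]; exact abs_of_nonneg (Nat.cast_nonneg j)
    have hqp : ∀ j : ℕ, q j + p j = 1 := by
      intro j
      have hc : (X 0 ⁻¹' sets ((j:ℤ)))ᶜ = {ω | (m:ℝ) * (1 + (j:ℝ)) ^ ((k:ℕ):ℝ) < |X 0 ω|} := by
        ext ω
        simp only [Set.mem_compl_iff, Set.mem_preimage, hsetsdef, Set.mem_setOf_eq, not_le,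
          hcast j]
      have := prob_add_prob_compl (μ := P) ((hsets (j:ℤ)).preimage (hmeas 0))
      rw [hc] at this
      exact this
    set r : ℕ → ℝ := fun j => (p j).toReal with hr
    have hpfin : ∀ j, p j ≠ ⊤ := fun j => measure_ne_top P _
    have hqfin : ∀ j, q j ≠ ⊤ := fun j => measure_ne_top P _
    have hq_exp : ∀ j : ℕ, q j ≤ ENNReal.ofReal (Real.exp (-(r j))) := by
      intro j
      have hqr : (q j).toReal = 1 - r j := by
        have h := congrArg ENNReal.toReal (hqp j)
        rw [ENNReal.toReal_add (hqfin j) (hpfin j), ENNReal.toReal_one] at h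
        simp only [hr]
        linarith
      calc q j = ENNReal.ofReal ((q j).toReal) := (ENNReal.ofReal_toReal (hqfin j)).symm
        _ ≤ ENNReal.ofReal (Real.exp (-(r j))) := ENNReal.ofReal_le_ofReal (by
            have := Real.add_one_le_exp (-(r j)); rw [hqr]; linarith)
    have hprod : ∀ N : ℕ, P (B k m) ≤ ∏ j ∈ Finset.range N, q j := by
      intro N
      set S : Finset ℤ := (Finset.range N).map ⟨(Nat.cast : ℕ → ℤ), Nat.cast_injective⟩ with hS
      have hBsub : B k m ⊆ ⋂ n ∈ S, X n ⁻¹' sets n := by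
        intro ω hω
        exact Set.mem_iInter₂.mpr fun n _ => hω n
      calc P (B k m) ≤ P (⋂ n ∈ S, X n ⁻¹' sets n) := measure_mono hBsub
        _ = ∏ n ∈ S, P (X n ⁻¹' sets n) :=
            hindep.measure_inter_preimage_eq_mul S (fun i _ => hsets i)
        _ = ∏ j ∈ Finset.range N, P (X (j:ℤ) ⁻¹' sets ((j:ℤ))) := Finset.prod_map _ _ _
        _ = ∏ j ∈ Finset.range N, q j :=
            Finset.prod_congr rfl fun j _ => (hident (j:ℤ)).measure_mem_eq (hsets _)
    have hbound : ∀ N : ℕ,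
        P (B k m) ≤ ENNReal.ofReal (Real.exp (-(∑ j ∈ Finset.range N, r j))) := by
      intro N
      calc P (B k m) ≤ ∏ j ∈ Finset.range N, q j := hprod N
        _ ≤ ∏ j ∈ Finset.range N, ENNReal.ofReal (Real.exp (-(r j))) :=
            Finset.prod_le_prod' (fun j _ => hq_exp j)
        _ = ENNReal.ofReal (∏ j ∈ Finset.range N, Real.exp (-(r j))) :=
            (ENNReal.ofReal_prod_of_nonneg (fun i _ => (Real.exp_pos _).le)).symm
        _ = ENNReal.ofReal (Real.exp (-(∑ j ∈ Finset.range N, r j))) := by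
            rw [← Real.exp_sum, Finset.sum_neg_distrib]
    have hnotsum : ¬ Summable r := by
      intro hs
      have h : (∑' j, p j) = ENNReal.ofReal (∑' j, r j) := by
        rw [ENNReal.ofReal_tsum_of_nonneg (fun j => ENNReal.toReal_nonneg) hs]
        exact (tsum_congr fun j => (ENNReal.ofReal_toReal (hpfin j))).symm
      rw [h] at hdiv
      exact ENNReal.ofReal_ne_top hdiv
    have htend : Tendsto (fun N => ∑ j ∈ Finset.range N, r j) atTop atTop :=
      (not_summable_iff_tendsto_nat_atTop_of_nonneg
        (fun j => ENNReal.toReal_nonneg)).mp hnotsum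
    have hzero : Tendsto (fun N => ENNReal.ofReal (Real.exp (-(∑ j ∈ Finset.range N, r j))))
        atTop (nhds 0) := by
      have h2 : Tendsto (fun N => Real.exp (-(∑ j ∈ Finset.range N, r j))) atTop (nhds 0) :=
        Real.tendsto_exp_neg_atTop_nhds_zero.comp htend
      simpa using ENNReal.tendsto_ofReal h2
    have : P (B k m) ≤ 0 := ge_of_tendsto' hzero hbound
    exact le_zero_iff.mp this
  -- A is contained in the union of the B k m
  refine measure_mono_null (t := ⋃ k : ℕ, ⋃ m : ℕ, B k m) ?_ ?_
  · rintro ω ⟨α, hα0, C, hC⟩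
    refine Set.mem_iUnion.mpr ⟨⌈α⌉₊, Set.mem_iUnion.mpr ⟨⌈C⌉₊, fun n => ?_⟩⟩
    have hb1 : (1:ℝ) ≤ 1 + |(n:ℝ)| := le_add_of_nonneg_right (abs_nonneg _)
    have h1 : (1 + |(n:ℝ)|) ^ α ≤ (1 + |(n:ℝ)|) ^ ((⌈α⌉₊:ℕ):ℝ) :=
      Real.rpow_le_rpow_of_exponent_le hb1 (by exact_mod_cast Nat.le_ceil α)
    have h2 : C * (1 + |(n:ℝ)|) ^ α ≤ ((⌈C⌉₊:ℕ):ℝ) * (1 + |(n:ℝ)|) ^ ((⌈α⌉₊:ℕ):ℝ) :=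
      mul_le_mul (by exact_mod_cast Nat.le_ceil C) h1 (by positivity) (by positivity)
    exact (hC n).trans h2
  · exact measure_iUnion_null fun k => measure_iUnion_null fun m => hBnull k m

/-- A discrete white noise `X` is almost surely tempered iff `𝔼[|X_0|^ε] < ∞`
for some `ε > 0`; if all positive absolute moments of `X_0` are infinite, then the
probability of being tempered is `0`. -/
theorem tempered_iff_finite_eps_moment
    {Ω : Type*} [MeasurableSpace Ω] (P : Measure Ω) [IsProbabilityMeasure P]
    (X : ℤ → Ω → ℝ) (hmeas : ∀ n, Measurable (X n))
    (hindep : iIndepFun X P)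
    (hident : ∀ n : ℤ, IdentDistrib (X n) (X 0) P P) :
    (P {ω | ∃ α : ℝ, 0 ≤ α ∧ ∃ C : ℝ, ∀ n : ℤ, |X n ω| ≤ C * (1 + |(n : ℝ)|) ^ α} = 1 ↔
      ∃ ε : ℝ, 0 < ε ∧ (∫⁻ ω, ENNReal.ofReal (|X 0 ω| ^ ε) ∂P) < ⊤) ∧
    ((∀ ε : ℝ, 0 < ε → (∫⁻ ω, ENNReal.ofReal (|X 0 ω| ^ ε) ∂P) = ⊤) →
      P {ω | ∃ α : ℝ, 0 ≤ α ∧ ∃ C : ℝ, ∀ n : ℤ, |X n ω| ≤ C * (1 + |(n : ℝ)|) ^ α} = 0) := by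
  have hzero := part_two P X hmeas hindep hident
  refine ⟨⟨fun h1 => ?_, fun ⟨ε, hε, hM⟩ => part_one P X hmeas hident ε hε hM⟩, hzero⟩
  by_contra h
  push_neg at h
  have hall : ∀ ε : ℝ, 0 < ε → (∫⁻ ω, ENNReal.ofReal (|X 0 ω| ^ ε) ∂P) = ⊤ :=
    fun ε hε => top_le_iff.mp (h ε hε)
  have := hzero hall
  rw [h1] at this
  exact one_ne_zero this
end

section
/- Let ν be a measure on ℝ with ν({0}) = 0 satisfying ∫ min(1, t²) ν(dt) < ∞ (a Lévy measure), let μ ∈ ℝ, σ² ≥ 0, and define the characteristic exponent Ψ(ξ) = iμξ − σ²ξ²/2 + ∫_{ℝ∖{0}} (e^{iξt} − 1 − iξt·1_{|t|<1}) ν(dt) for ξ ∈ ℝ. If there exists ε with 0 < ε ≤ 1 such that ∫_{|t|≥1} |t|^ε ν(dt) < ∞, then there exists a constant C > 0 such that |Ψ(ξ)| ≤ C (|ξ|^ε + |ξ|²) for all ξ ∈ ℝ. -/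
open MeasureTheory Complex

lemma aux_exp_sub_one_le {ε : ℝ} (hε0 : 0 < ε) (hε1 : ε ≤ 1) (x : ℝ) :
    ‖Complex.exp (↑x * Complex.I) - 1‖ ≤ 2 * |x| ^ ε := by
  have habs : ‖↑x * Complex.I‖ = |x| := by
    simp [map_mul, Complex.norm_real]
  rcases le_or_gt |x| 1 with h | h
  · have h1 : ‖Complex.exp (↑x * Complex.I) - 1‖ ≤ 2 * |x| := by
      have := Complex.norm_exp_sub_one_le (x := ↑x * Complex.I) (by rw [habs]; exact h)
      rwa [habs] at this
    refine h1.trans ?_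
    rcases eq_or_lt_of_le (abs_nonneg x) with h0 | h0
    · simp [← h0, Real.zero_rpow hε0.ne']
    · have : |x| ^ (1:ℝ) ≤ |x| ^ ε := Real.rpow_le_rpow_of_exponent_ge h0 h hε1
      rw [Real.rpow_one] at this
      linarith
  · have h2 : ‖Complex.exp (↑x * Complex.I) - 1‖ ≤ 2 := by
      calc ‖Complex.exp (↑x * Complex.I) - 1‖
          ≤ ‖Complex.exp (↑x * Complex.I)‖ + ‖(1:ℂ)‖ :=
            norm_sub_le _ _
        _ = 2 := by rw [Complex.norm_exp_ofReal_mul_I]; norm_num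
    refine h2.trans ?_
    have : (1:ℝ) ≤ |x| ^ ε := Real.one_le_rpow h.le hε0.le
    linarith

lemma aux_exp_sub_one_sub_id_le (x : ℝ) :
    ‖Complex.exp (↑x * Complex.I) - 1 - ↑x * Complex.I‖ ≤ 3 * x ^ 2 := by
  have habs : ‖↑x * Complex.I‖ = |x| := by
    simp [map_mul, Complex.norm_real]
  rcases le_or_gt |x| 1 with h | h
  · have := Complex.norm_exp_sub_one_sub_id_le (x := ↑x * Complex.I) (by rw [habs]; exact h)
    rw [habs] at this
    nlinarith [sq_nonneg x, _root_.sq_abs x]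
  · have h2 : ‖Complex.exp (↑x * Complex.I) - 1‖ ≤ 2 := by
      calc ‖Complex.exp (↑x * Complex.I) - 1‖
          ≤ ‖Complex.exp (↑x * Complex.I)‖ + ‖(1:ℂ)‖ :=
            norm_sub_le _ _
        _ = 2 := by rw [Complex.norm_exp_ofReal_mul_I]; norm_num
    calc ‖Complex.exp (↑x * Complex.I) - 1 - ↑x * Complex.I‖
        ≤ ‖Complex.exp (↑x * Complex.I) - 1‖ + ‖↑x * Complex.I‖ :=
          norm_sub_le _ _
      _ ≤ 2 + |x| := by rw [habs]; linarith
      _ ≤ 3 * x ^ 2 := by nlinarith [_root_.sq_abs x, abs_nonneg x]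

/-- If `ν` is a Lévy measure admitting a finite `ε`-moment at infinity for some
`0 < ε ≤ 1`, then the characteristic exponent
`Ψ(ξ) = iμξ − σ²ξ²/2 + ∫ (e^{iξt} − 1 − iξt 1_{|t|<1}) ν(dt)` satisfies
`|Ψ(ξ)| ≤ C(|ξ|^ε + |ξ|²)` for some `C > 0` and all `ξ ∈ ℝ`. -/
theorem charExponent_bound
    (ν : Measure ℝ) (hν0 : ν {0} = 0)
    (hνlevy : (∫⁻ t : ℝ, ENNReal.ofReal (min 1 (t ^ 2)) ∂ν) < ⊤)
    (μ : ℝ) (σ2 : ℝ) (hσ2 : 0 ≤ σ2)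
    (ε : ℝ) (hε0 : 0 < ε) (hε1 : ε ≤ 1)
    (hmom : (∫⁻ t in {t : ℝ | 1 ≤ |t|}, ENNReal.ofReal (|t| ^ ε) ∂ν) < ⊤)
    (Ψ : ℝ → ℂ)
    (hΨ : ∀ ξ : ℝ, Ψ ξ = Complex.I * μ * ξ - σ2 * ξ ^ 2 / 2 +
      ∫ t : ℝ, (Complex.exp (Complex.I * ξ * t) - 1 -
        Complex.I * ξ * t * (if |t| < 1 then 1 else 0)) ∂ν) :
    ∃ C : ℝ, 0 < C ∧ ∀ ξ : ℝ, ‖Ψ ξ‖ ≤ C * (|ξ| ^ ε + |ξ| ^ 2) := by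
  set A : ℝ := (∫⁻ t : ℝ, ENNReal.ofReal (min 1 (t ^ 2)) ∂ν).toReal with hA
  set B : ℝ := (∫⁻ t in {t : ℝ | 1 ≤ |t|}, ENNReal.ofReal (|t| ^ ε) ∂ν).toReal with hB
  have hA0 : 0 ≤ A := ENNReal.toReal_nonneg
  have hB0 : 0 ≤ B := ENNReal.toReal_nonneg
  refine ⟨|μ| + σ2 / 2 + 3 * A + 2 * B + 1, by positivity, fun ξ => ?_⟩
  -- bound the integral term
  have hs : MeasurableSet {t : ℝ | |t| < 1} :=
    measurableSet_lt (measurable_id.abs) measurable_const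
  have hsc : {t : ℝ | |t| < 1}ᶜ = {t : ℝ | 1 ≤ |t|} := by
    ext t; simp [not_lt]
  have hInt : ‖∫ t : ℝ, (Complex.exp (Complex.I * ξ * t) - 1 -
      Complex.I * ξ * t * (if |t| < 1 then 1 else 0)) ∂ν‖
      ≤ 3 * ξ ^ 2 * A + 2 * |ξ| ^ ε * B := by
    have key : ∀ t : ℝ, ENNReal.ofReal ‖Complex.exp (Complex.I * ξ * t) - 1 -
        Complex.I * ξ * t * (if |t| < 1 then 1 else 0)‖
        ≤ ENNReal.ofReal (3 * ξ ^ 2) * ENNReal.ofReal (min 1 (t ^ 2)) +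
          ({t : ℝ | 1 ≤ |t|}).indicator
            (fun t => ENNReal.ofReal (2 * |ξ| ^ ε) * ENNReal.ofReal (|t| ^ ε)) t := by
      intro t
      have harg : Complex.I * ↑ξ * ↑t = ↑(ξ * t) * Complex.I := by push_cast; ring
      by_cases ht : |t| < 1
      · rw [if_pos ht, mul_one]
        have h1 : ‖Complex.exp (Complex.I * ξ * t) - 1 - Complex.I * ξ * t‖
            ≤ 3 * (ξ * t) ^ 2 := by
          rw [harg]
          exact aux_exp_sub_one_sub_id_le (ξ * t)
        have hmin : min 1 (t ^ 2) = t ^ 2 := min_eq_right (by nlinarith [_root_.sq_abs t, abs_nonneg t])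
        have h2 : 3 * (ξ * t) ^ 2 = 3 * ξ ^ 2 * t ^ 2 := by ring
        refine le_trans ?_ le_self_add
        rw [← ENNReal.ofReal_mul (by positivity), hmin]
        exact ENNReal.ofReal_le_ofReal (by rw [← h2]; exact h1)
      · rw [if_neg ht, mul_zero, sub_zero]
        have h1 : ‖Complex.exp (Complex.I * ξ * t) - 1‖ ≤ 2 * |ξ * t| ^ ε := by
          rw [harg]
          exact aux_exp_sub_one_le hε0 hε1 (ξ * t)
        have h2 : 2 * |ξ * t| ^ ε = 2 * |ξ| ^ ε * |t| ^ ε := by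
          rw [abs_mul, Real.mul_rpow (abs_nonneg _) (abs_nonneg _)]; ring
        have hmem : t ∈ {t : ℝ | 1 ≤ |t|} := by simpa [not_lt] using ht
        refine le_trans ?_ le_add_self
        rw [Set.indicator_of_mem hmem, ← ENNReal.ofReal_mul (by positivity)]
        exact ENNReal.ofReal_le_ofReal (h1.trans_eq h2)
    have hmeas1 : Measurable fun t : ℝ =>
        ENNReal.ofReal (3 * ξ ^ 2) * ENNReal.ofReal (min 1 (t ^ 2)) := by
      apply Measurable.const_mul
      exact ENNReal.measurable_ofReal.comp ((measurable_const.min (measurable_id.pow_const 2)))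
    have hmeas2 : Measurable fun t : ℝ => ENNReal.ofReal (min 1 (t ^ 2)) :=
      ENNReal.measurable_ofReal.comp (measurable_const.min (measurable_id.pow_const 2))
    have hlin : (∫⁻ t : ℝ, ENNReal.ofReal ‖Complex.exp (Complex.I * ξ * t) - 1 -
        Complex.I * ξ * t * (if |t| < 1 then 1 else 0)‖ ∂ν)
        ≤ ENNReal.ofReal (3 * ξ ^ 2 * A + 2 * |ξ| ^ ε * B) := by
      calc (∫⁻ t : ℝ, ENNReal.ofReal ‖Complex.exp (Complex.I * ξ * t) - 1 -
            Complex.I * ξ * t * (if |t| < 1 then 1 else 0)‖ ∂ν)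
          ≤ ∫⁻ t : ℝ, (ENNReal.ofReal (3 * ξ ^ 2) * ENNReal.ofReal (min 1 (t ^ 2)) +
              ({t : ℝ | 1 ≤ |t|}).indicator
                (fun t => ENNReal.ofReal (2 * |ξ| ^ ε) * ENNReal.ofReal (|t| ^ ε)) t) ∂ν :=
            lintegral_mono key
        _ = ENNReal.ofReal (3 * ξ ^ 2) * (∫⁻ t : ℝ, ENNReal.ofReal (min 1 (t ^ 2)) ∂ν) +
            ENNReal.ofReal (2 * |ξ| ^ ε) *
              (∫⁻ t in {t : ℝ | 1 ≤ |t|}, ENNReal.ofReal (|t| ^ ε) ∂ν) := by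
            have hmeas3 : Measurable fun t : ℝ => ENNReal.ofReal (|t| ^ ε) := by
              apply ENNReal.measurable_ofReal.comp
              exact Measurable.pow measurable_id.abs measurable_const
            rw [lintegral_add_left hmeas1, lintegral_const_mul _ hmeas2,
              lintegral_indicator (by rw [← hsc]; exact hs.compl) _,
              lintegral_const_mul _ hmeas3]
        _ ≤ ENNReal.ofReal (3 * ξ ^ 2 * A + 2 * |ξ| ^ ε * B) := by
            rw [(ENNReal.ofReal_toReal hνlevy.ne).symm.trans rfl,
              (ENNReal.ofReal_toReal hmom.ne).symm.trans rfl,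
              ← ENNReal.ofReal_mul (by positivity), ← ENNReal.ofReal_mul (by positivity),
              ← ENNReal.ofReal_add (by positivity) (by positivity)]
    calc ‖∫ t : ℝ, (Complex.exp (Complex.I * ξ * t) - 1 -
          Complex.I * ξ * t * (if |t| < 1 then 1 else 0)) ∂ν‖
        ≤ (∫⁻ t : ℝ, ENNReal.ofReal ‖Complex.exp (Complex.I * ξ * t) - 1 -
            Complex.I * ξ * t * (if |t| < 1 then 1 else 0)‖ ∂ν).toReal := by
          exact norm_integral_le_lintegral_norm _
      _ ≤ 3 * ξ ^ 2 * A + 2 * |ξ| ^ ε * B :=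
          ENNReal.toReal_le_of_le_ofReal (by positivity) hlin
  -- assemble
  rw [hΨ ξ]
  have h1 : ‖Complex.I * μ * ξ‖ = |μ| * |ξ| := by
    simp [map_mul, Complex.norm_real]
  have h2 : ‖(σ2 : ℂ) * ξ ^ 2 / 2‖ = σ2 * ξ ^ 2 / 2 := by
    rw [norm_div, norm_mul, norm_pow]
    simp [Complex.norm_real, _root_.abs_of_nonneg hσ2, _root_.sq_abs]
  have htri : ‖Complex.I * μ * ξ - σ2 * ξ ^ 2 / 2 +
      ∫ t : ℝ, (Complex.exp (Complex.I * ξ * t) - 1 -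
        Complex.I * ξ * t * (if |t| < 1 then 1 else 0)) ∂ν‖
      ≤ ‖Complex.I * μ * ξ‖ + ‖(σ2 : ℂ) * ξ ^ 2 / 2‖ +
        ‖∫ t : ℝ, (Complex.exp (Complex.I * ξ * t) - 1 -
          Complex.I * ξ * t * (if |t| < 1 then 1 else 0)) ∂ν‖ := by
    calc ‖Complex.I * μ * ξ - σ2 * ξ ^ 2 / 2 + _‖
        ≤ ‖Complex.I * μ * ξ - σ2 * ξ ^ 2 / 2‖ + _ := norm_add_le _ _
      _ ≤ _ := by gcongr; exact norm_sub_le _ _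
  have hxi : |ξ| ≤ |ξ| ^ ε + |ξ| ^ 2 := by
    rcases le_or_gt |ξ| 1 with h | h
    · rcases eq_or_lt_of_le (abs_nonneg ξ) with h0 | h0
      · simp [← h0]
        positivity
      · have : |ξ| ^ (1:ℝ) ≤ |ξ| ^ ε := Real.rpow_le_rpow_of_exponent_ge h0 h hε1
        rw [Real.rpow_one] at this
        nlinarith [sq_nonneg ξ, _root_.sq_abs ξ]
    · have h' : |ξ| ≤ |ξ| ^ 2 := by nlinarith [abs_nonneg ξ]
      have hrp : (0:ℝ) ≤ |ξ| ^ ε := Real.rpow_nonneg (abs_nonneg ξ) ε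
      linarith
  have hE : (0:ℝ) ≤ |ξ| ^ ε := Real.rpow_nonneg (abs_nonneg ξ) ε
  have hS : ξ ^ 2 = |ξ| ^ 2 := (_root_.sq_abs ξ).symm
  refine htri.trans ?_
  rw [h1, h2]
  nlinarith [hInt, mul_le_mul_of_nonneg_left hxi (abs_nonneg μ), sq_nonneg ξ, _root_.sq_abs ξ,
    mul_nonneg hA0 (sq_nonneg ξ), mul_nonneg hB0 hE]
end
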